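/- A series-parallel extension of a gammoid is a gammoid; in particular, a parallel extension of a strict gammoid is a gammoid. -/

import Mathlib

/-- `Linked Adj B X` : `X` can be linked into `B` in the directed graph with adjacency `Adj`
by pairwise vertex-disjoint directed paths. -/
def Linked {V : Type*} (Adj : V → V → Prop) (B : Set V) (X : Set V) : Prop :=
  ∃ P : X → List V,
    (∀ x : X, (P x).Chain' Adj ∧ (P x).Nodup ∧ (P x).head? = some x.1 ∧
      ∃ y ∈ B, (P x).getLast? = some y) ∧
    ∀ x x' : X, x ≠ x' → ∀ v ∈ P x, v ∉ P x'

/-- The matroid with ground set `E` and base collection `ℬ` is a gammoid: it is isomorphic (via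
an injection `φ` of the ground set into the vertex set of a directed graph) to the restriction
of a strict gammoid `L(G, B₀)` to a subset of the vertices, the bases being the maximal
linkable sets. -/
def IsGammoidBases {α : Type} [DecidableEq α] (E : Finset α) (ℬ : Finset α → Prop) : Prop :=
  ∃ (V : Type) (Adj : V → V → Prop) (B₀ : Set V) (φ : α → V),
    Set.InjOn φ ↑E ∧
    ∀ B : Finset α, ℬ B ↔
      ((B ⊆ E ∧ Linked Adj B₀ (φ '' ↑B)) ∧
        ∀ B' : Finset α, (B' ⊆ E ∧ Linked Adj B₀ (φ '' ↑B')) → B ⊆ B' → B = B')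

/-- The matroid with ground set `E` and base collection `ℬ` is a strict gammoid: there is a
directed graph on the vertex set `E` itself, and a target set `B₀ ⊆ E`, such that the bases are
exactly the maximal subsets of `E` linkable into `B₀` by vertex-disjoint directed paths. -/
def IsStrictGammoidBases {α : Type} [DecidableEq α] (E : Finset α) (ℬ : Finset α → Prop) :
    Prop :=
  ∃ (Adj : α → α → Prop) (B₀ : Set α), (∀ u v, Adj u v → u ∈ E ∧ v ∈ E) ∧ B₀ ⊆ ↑E ∧
    ∀ B : Finset α, ℬ B ↔
      ((B ⊆ E ∧ Linked Adj B₀ ↑B) ∧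
        ∀ B' : Finset α, (B' ⊆ E ∧ Linked Adj B₀ ↑B') → B ⊆ B' → B = B')

/-- One step of series or parallel extension, acting on a pair (ground set, base collection):
the new element `y` is fresh, and the new bases are those of the series extension `sM(x,y)`
or of the parallel extension `pM(x,y)`. -/
def SPStep {α : Type} [DecidableEq α]
    (M M' : Finset α × (Finset α → Prop)) : Prop :=
  ∃ x ∈ M.1, ∃ y ∉ M.1, M'.1 = insert y M.1 ∧
    ((∀ C, M'.2 C ↔
        (∃ B, M.2 B ∧ C = insert y B) ∨ (∃ B, M.2 B ∧ x ∉ B ∧ C = insert x B)) ∨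
     (∀ C, M'.2 C ↔
        M.2 C ∨ (∃ B, M.2 B ∧ x ∈ B ∧ C = insert y (B.erase x))))

/-! ### Auxiliary machinery -/

section Paths

variable {V V' : Type*}

/-- A single path datum in a linkage. -/
def GoodPath (Adj : V → V → Prop) (B₀ : Set V) (v : V) (l : List V) : Prop :=
  l.Chain' Adj ∧ l.Nodup ∧ l.head? = some v ∧ ∃ y ∈ B₀, l.getLast? = some y

theorem linked_iff {Adj : V → V → Prop} {B₀ X : Set V} :
    Linked Adj B₀ X ↔ ∃ P : X → List V, (∀ x : X, GoodPath Adj B₀ x.1 (P x)) ∧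
      ∀ x x' : X, x ≠ x' → ∀ v ∈ P x, v ∉ P x' := Iff.rfl

theorem Linked.mono {Adj : V → V → Prop} {B₀ X Y : Set V} (h : Linked Adj B₀ Y)
    (hXY : X ⊆ Y) : Linked Adj B₀ X := by
  obtain ⟨P, h1, h2⟩ := h
  refine ⟨fun x => P ⟨x.1, hXY x.2⟩, fun x => h1 _, fun x x' hne => h2 _ _ ?_⟩
  intro hh
  exact hne (Subtype.ext (Subtype.mk_eq_mk.1 hh))

variable {Adj : V → V → Prop} {Adj' : V' → V' → Prop} {B₀ : Set V} {B₀' : Set V'} {f : V → V'}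

theorem GoodPath.map (hf : Function.Injective f) (hA : ∀ u v, Adj u v → Adj' (f u) (f v))
    (hB : ∀ v ∈ B₀, f v ∈ B₀') {v : V} {l : List V} (h : GoodPath Adj B₀ v l) :
    GoodPath Adj' B₀' (f v) (l.map f) := by
  obtain ⟨h1, h2, h3, w, hw, h4⟩ := h
  refine ⟨(List.isChain_map f).2 (h1.imp fun a b hab => hA a b hab), h2.map hf, ?_, f w, hB w hw, ?_⟩
  · rw [List.head?_map, h3]; rfl
  · rw [List.getLast?_map, h4]; rfl

theorem chain'_exists_map (closed : ∀ (u : V) (v' : V'), Adj' (f u) v' → ∃ w, v' = f w) :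
    ∀ (l : List V') (v : V), (f v :: l).Chain' Adj' → ∃ m : List V, l = m.map f := by
  intro l
  induction l with
  | nil => exact fun v _ => ⟨[], rfl⟩
  | cons b l ih =>
    intro v h
    rw [List.Chain', List.isChain_cons_cons] at h
    obtain ⟨u, rfl⟩ := closed v b h.1
    obtain ⟨m, hm⟩ := ih u h.2
    exact ⟨u :: m, by rw [List.map_cons, ← hm]⟩

theorem GoodPath.pull (hf : Function.Injective f)
    (hA : ∀ u v, Adj' (f u) (f v) → Adj u v) (hB : ∀ v, f v ∈ B₀' → v ∈ B₀)
    (closed : ∀ (u : V) (v' : V'), Adj' (f u) v' → ∃ w, v' = f w)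
    {v : V} {l : List V'} (h : GoodPath Adj' B₀' (f v) l) :
    ∃ m : List V, l = m.map f ∧ GoodPath Adj B₀ v m := by
  obtain ⟨h1, h2, h3, w, hw, h4⟩ := h
  cases l with
  | nil => simp at h3
  | cons c l' =>
    have hc : c = f v := by simpa using h3
    subst hc
    obtain ⟨m, rfl⟩ := chain'_exists_map closed l' v h1
    have hl : (f v :: m.map f) = (v :: m).map f := rfl
    rw [hl] at h1 h2 h4
    obtain ⟨u, hu, hfu⟩ : ∃ u, (v :: m).getLast? = some u ∧ f u = w := by
      rw [List.getLast?_map] at h4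
      obtain ⟨u, hu1, hu2⟩ := Option.map_eq_some_iff.1 h4
      exact ⟨u, hu1, hu2⟩
    exact ⟨v :: m, rfl, ((List.isChain_map f).1 h1).imp (fun a b hab => hA a b hab),
      List.Nodup.of_map f h2, rfl, u, hB u (hfu ▸ hw), hu⟩

/-- Peel off the first step of a path that does not immediately end. -/
theorem GoodPath.step {v : V} {l : List V} (h : GoodPath Adj B₀ v l) (hv : v ∉ B₀) :
    ∃ c l', l = v :: c :: l' ∧ Adj v c ∧ GoodPath Adj B₀ c (c :: l') := by
  obtain ⟨h1, h2, h3, w, hw, h4⟩ := h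
  cases l with
  | nil => simp at h3
  | cons a l0 =>
    have ha : a = v := by simpa using h3
    subst ha
    cases l0 with
    | nil =>
      have : a = w := by simpa using h4
      exact absurd (this ▸ hw) hv
    | cons c l' =>
      rw [List.Chain', List.isChain_cons_cons] at h1
      refine ⟨c, l', rfl, h1.1, h1.2, h2.of_cons, rfl, w, hw, ?_⟩
      rw [← List.getLast?_cons_cons (a := a)]; exact h4

theorem GoodPath.prefix_elim {a w : V'} (haB : a ∉ B₀') (haE : ∀ v', Adj' a v' → v' = w)
    {l : List V'} (h : GoodPath Adj' B₀' a l) :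
    ∃ l', l = a :: w :: l' ∧ GoodPath Adj' B₀' w (w :: l') := by
  obtain ⟨c, l', rfl, hac, hgp⟩ := h.step haB
  cases haE c hac
  exact ⟨l', rfl, hgp⟩

theorem GoodPath.cons {v w : V} {l : List V} (h : GoodPath Adj B₀ w l) (hvw : Adj v w)
    (hv : v ∉ l) : GoodPath Adj B₀ v (v :: l) := by
  obtain ⟨h1, h2, h3, u, hu, h4⟩ := h
  have hl : l ≠ [] := by rintro rfl; simp at h3
  refine ⟨List.isChain_cons.2 ⟨fun b hb => ?_, h1⟩, List.nodup_cons.2 ⟨hv, h2⟩, rfl, u, hu, ?_⟩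
  · rw [h3] at hb; cases hb; exact hvw
  · obtain ⟨c, l', rfl⟩ := List.exists_cons_of_ne_nil hl
    rw [List.getLast?_cons_cons]; exact h4

theorem family_push (hf : Function.Injective f)
    (hA : ∀ u v, Adj u v → Adj' (f u) (f v)) (hB : ∀ v ∈ B₀, f v ∈ B₀')
    {S : Set V} (P : S → List V) (hgp : ∀ s : S, GoodPath Adj B₀ s.1 (P s))
    (hdisj : ∀ s s' : S, s ≠ s' → ∀ v ∈ P s, v ∉ P s') :
    ∃ Q : (f '' S : Set V') → List V',
      (∀ z : (f '' S : Set V'), GoodPath Adj' B₀' z.1 (Q z)) ∧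
      (∀ z z' : (f '' S : Set V'), z ≠ z' → ∀ v ∈ Q z, v ∉ Q z') ∧
      (∀ z : (f '' S : Set V'), ∃ s : S, f s.1 = z.1 ∧ Q z = (P s).map f) := by
  have hsel : ∀ z : (f '' S : Set V'), ∃ s : S, f s.1 = z.1 := fun z => by
    obtain ⟨s, hs, hfs⟩ := z.2; exact ⟨⟨s, hs⟩, hfs⟩
  choose sel hselspec using hsel
  refine ⟨fun z => (P (sel z)).map f, ?_, ?_, fun z => ⟨sel z, hselspec z, rfl⟩⟩
  · intro z
    have := (hgp (sel z)).map hf hA hB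
    rwa [hselspec z] at this
  · intro z z' hne v hv hv'
    have hss : sel z ≠ sel z' := by
      intro hEq; apply hne; apply Subtype.ext
      rw [← hselspec z, ← hselspec z', hEq]
    obtain ⟨u, hu, rfl⟩ := List.mem_map.1 hv
    obtain ⟨u', hu', huu⟩ := List.mem_map.1 hv'
    cases hf huu
    exact hdisj _ _ hss u hu hu'

theorem family_pull (hf : Function.Injective f)
    (hA : ∀ u v, Adj' (f u) (f v) → Adj u v) (hB : ∀ v, f v ∈ B₀' → v ∈ B₀)
    (closed : ∀ (u : V) (v' : V'), Adj' (f u) v' → ∃ w, v' = f w)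
    {S : Set V} (Q : (f '' S : Set V') → List V')
    (hgp : ∀ z : (f '' S : Set V'), GoodPath Adj' B₀' z.1 (Q z))
    (hdisj : ∀ z z' : (f '' S : Set V'), z ≠ z' → ∀ v ∈ Q z, v ∉ Q z') :
    ∃ P : S → List V, (∀ s : S, GoodPath Adj B₀ s.1 (P s)) ∧
      (∀ s s' : S, s ≠ s' → ∀ v ∈ P s, v ∉ P s') ∧
      ∀ s : S, (P s).map f = Q ⟨f s.1, ⟨s.1, s.2, rfl⟩⟩ := by
  have key : ∀ s : S, ∃ m : List V,
      Q ⟨f s.1, ⟨s.1, s.2, rfl⟩⟩ = m.map f ∧ GoodPath Adj B₀ s.1 m := fun s =>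
    GoodPath.pull hf hA hB closed (hgp ⟨f s.1, ⟨s.1, s.2, rfl⟩⟩)
  choose P hPQ hP using key
  refine ⟨P, hP, ?_, fun s => (hPQ s).symm⟩
  intro s s' hne v hv hv'
  have hidx : (⟨f s.1, ⟨s.1, s.2, rfl⟩⟩ : (f '' S : Set V')) ≠ ⟨f s'.1, ⟨s'.1, s'.2, rfl⟩⟩ :=
    fun h => hne (Subtype.ext (hf (Subtype.mk_eq_mk.1 h)))
  exact hdisj _ _ hidx (f v) (by rw [hPQ s]; exact List.mem_map_of_mem (f := f) hv)
    (by rw [hPQ s']; exact List.mem_map_of_mem (f := f) hv')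

end Paths

section Gadgets

variable {V V' : Type*} {Adj : V → V → Prop} {Adj' : V' → V' → Prop}
  {B₀ : Set V} {B₀' : Set V'} {f : V → V'}

theorem linked_image_iff (hf : Function.Injective f)
    (hA1 : ∀ u v, Adj u v → Adj' (f u) (f v)) (hA2 : ∀ u v, Adj' (f u) (f v) → Adj u v)
    (hB1 : ∀ v ∈ B₀, f v ∈ B₀') (hB2 : ∀ v, f v ∈ B₀' → v ∈ B₀)
    (closed : ∀ (u : V) (v' : V'), Adj' (f u) v' → ∃ w, v' = f w)
    {S : Set V} : Linked Adj' B₀' (f '' S) ↔ Linked Adj B₀ S := by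
  constructor
  · intro h
    obtain ⟨Q, hgpQ, hdisjQ⟩ := linked_iff.1 h
    obtain ⟨P, h1, h2, _⟩ := family_pull hf hA2 hB2 closed Q hgpQ hdisjQ
    exact linked_iff.2 ⟨P, h1, h2⟩
  · intro h
    obtain ⟨P, hgpP, hdisjP⟩ := linked_iff.1 h
    obtain ⟨Q, h1, h2, _⟩ := family_push hf hA1 hB1 P hgpP hdisjP
    exact linked_iff.2 ⟨Q, h1, h2⟩

/-- Gadget: one extra vertex with a private escape into a private target. -/
theorem linked_insert_single (hf : Function.Injective f)
    (hA1 : ∀ u v, Adj u v → Adj' (f u) (f v)) (hA2 : ∀ u v, Adj' (f u) (f v) → Adj u v)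
    (hB1 : ∀ v ∈ B₀, f v ∈ B₀') (hB2 : ∀ v, f v ∈ B₀' → v ∈ B₀)
    (closed : ∀ (u : V) (v' : V'), Adj' (f u) v' → ∃ w, v' = f w)
    {S : Set V} {a t : V'} (hat : Adj' a t) (hneq : a ≠ t)
    (har : a ∉ Set.range f) (htr : t ∉ Set.range f) (htB : t ∈ B₀') :
    Linked Adj' B₀' (insert a (f '' S)) ↔ Linked Adj B₀ S := by
  constructor
  · intro h
    exact (linked_image_iff hf hA1 hA2 hB1 hB2 closed).1 (h.mono (Set.subset_insert a _))
  · intro h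
    obtain ⟨P, hgp, hdisj⟩ := linked_iff.1 h
    obtain ⟨Q, h1, h2, h3⟩ := family_push hf hA1 hB1 P hgp hdisj
    classical
    refine linked_iff.2 ⟨fun z => if hz : z.1 = a then [a, t]
      else Q ⟨z.1, (Set.mem_insert_iff.1 z.2).resolve_left hz⟩, ?_, ?_⟩
    · intro z
      dsimp only
      split
      · next hz =>
        rw [hz]
        exact ⟨by simp [List.Chain', hat], by simp [hneq], rfl, t, htB, by simp⟩
      · exact h1 _
    · intro z z' hne v hv hv'
      dsimp only at hv hv'
      split at hv <;> split at hv'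
      · next hz hz' => exact hne (Subtype.ext (hz.trans hz'.symm))
      · next hz hz' =>
        obtain ⟨s, _, hQ⟩ := h3 ⟨z'.1, (Set.mem_insert_iff.1 z'.2).resolve_left hz'⟩
        rw [hQ] at hv'
        obtain ⟨u, _, rfl⟩ := List.mem_map.1 hv'
        rcases (by simpa using hv : f u = a ∨ f u = t) with h | h
        · exact har ⟨u, h⟩
        · exact htr ⟨u, h⟩
      · next hz hz' =>
        obtain ⟨s, _, hQ⟩ := h3 ⟨z.1, (Set.mem_insert_iff.1 z.2).resolve_left hz⟩
        rw [hQ] at hv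
        obtain ⟨u, _, rfl⟩ := List.mem_map.1 hv
        rcases (by simpa using hv' : f u = a ∨ f u = t) with h | h
        · exact har ⟨u, h⟩
        · exact htr ⟨u, h⟩
      · next hz hz' =>
        refine h2 _ _ ?_ v hv hv'
        intro hEq
        exact hne (Subtype.ext (Subtype.mk_eq_mk.1 hEq))

/-- Gadget: one extra vertex whose unique out-neighbour is `f x₀`, with `x₀ ∈ S`:
not linkable. -/
theorem not_linked_insert_prefix {a : V'} {x₀ : V}
    (har : a ∉ Set.range f) (haB : a ∉ B₀') (haE : ∀ v', Adj' a v' → v' = f x₀)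
    {S : Set V} (hx₀S : x₀ ∈ S) : ¬ Linked Adj' B₀' (insert a (f '' S)) := by
  intro h
  obtain ⟨P, hgp, hdisj⟩ := linked_iff.1 h
  have hia : a ∈ insert a (f '' S) := Set.mem_insert _ _
  have hiz : f x₀ ∈ insert a (f '' S) := Set.mem_insert_of_mem _ ⟨x₀, hx₀S, rfl⟩
  obtain ⟨l', hPa, _⟩ := (hgp ⟨a, hia⟩).prefix_elim haB haE
  have h1 : f x₀ ∈ P ⟨a, hia⟩ := by
    rw [hPa]; exact List.mem_cons_of_mem _ (List.mem_cons_self)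
  have h2 : f x₀ ∈ P ⟨f x₀, hiz⟩ :=
    List.mem_of_mem_head? (by rw [(hgp ⟨f x₀, hiz⟩).2.2.1]; rfl)
  have hne : (⟨a, hia⟩ : (insert a (f '' S) : Set V')) ≠ ⟨f x₀, hiz⟩ := by
    intro h
    exact har ⟨x₀, (Subtype.mk_eq_mk.1 h).symm⟩
  exact hdisj _ _ hne (f x₀) h1 h2

/-- Gadget: one extra vertex whose unique out-neighbour is `f x₀`, with `x₀ ∉ S`:
it acts exactly like a parallel copy of `x₀`. -/
theorem linked_insert_prefix (hf : Function.Injective f)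
    (hA1 : ∀ u v, Adj u v → Adj' (f u) (f v)) (hA2 : ∀ u v, Adj' (f u) (f v) → Adj u v)
    (hB1 : ∀ v ∈ B₀, f v ∈ B₀') (hB2 : ∀ v, f v ∈ B₀' → v ∈ B₀)
    (closed : ∀ (u : V) (v' : V'), Adj' (f u) v' → ∃ w, v' = f w)
    {S : Set V} {a : V'} {x₀ : V}
    (har : a ∉ Set.range f) (haB : a ∉ B₀') (haE : ∀ v', Adj' a v' → v' = f x₀)
    (haA : Adj' a (f x₀)) (hx₀ : x₀ ∉ S) :
    Linked Adj' B₀' (insert a (f '' S)) ↔ Linked Adj B₀ (insert x₀ S) := by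
  classical
  constructor
  · intro hLL
    obtain ⟨P, hgp, hdisj⟩ := linked_iff.1 hLL
    have hia : a ∈ insert a (f '' S) := Set.mem_insert _ _
    obtain ⟨l', hPa, hgpl'⟩ := (hgp ⟨a, hia⟩).prefix_elim haB haE
    obtain ⟨m, hm, hgpm⟩ := hgpl'.pull hf hA2 hB2 closed
    obtain ⟨Pm, h1, h2, h3⟩ := family_pull hf hA2 hB2 closed
      (fun z => P ⟨z.1, Set.mem_insert_of_mem _ z.2⟩) (fun z => hgp _)
      (fun z z' hne => hdisj _ _ (fun hh => hne (Subtype.ext (Subtype.mk_eq_mk.1 hh))))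
    refine linked_iff.2 ⟨fun s => if hs : s.1 = x₀ then m
      else Pm ⟨s.1, (Set.mem_insert_iff.1 s.2).resolve_left hs⟩, ?_, ?_⟩
    · intro s
      dsimp only
      split
      · next hs => rw [hs]; exact hgpm
      · exact h1 _
    · intro s s' hne v hv hv'
      dsimp only at hv hv'
      split at hv <;> split at hv'
      · next hs hs' => exact hne (Subtype.ext (hs.trans hs'.symm))
      · next hs hs' =>
        have hfv1 : f v ∈ P ⟨a, hia⟩ := by
          rw [hPa, hm]
          exact List.mem_cons_of_mem _ (List.mem_map_of_mem (f := f) hv)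
        have hfv2 := List.mem_map_of_mem (f := f) hv'
        rw [h3 ⟨s'.1, (Set.mem_insert_iff.1 s'.2).resolve_left hs'⟩] at hfv2
        exact hdisj _ _ (fun hh => har ⟨s'.1, (Subtype.mk_eq_mk.1 hh).symm⟩) (f v) hfv1 hfv2
      · next hs hs' =>
        have hfv1 : f v ∈ P ⟨a, hia⟩ := by
          rw [hPa, hm]
          exact List.mem_cons_of_mem _ (List.mem_map_of_mem (f := f) hv')
        have hfv2 := List.mem_map_of_mem (f := f) hv
        rw [h3 ⟨s.1, (Set.mem_insert_iff.1 s.2).resolve_left hs⟩] at hfv2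
        exact (hdisj _ _ (fun hh => har ⟨s.1, (Subtype.mk_eq_mk.1 hh).symm⟩) (f v) hfv1 hfv2).elim
      · next hs hs' =>
        refine h2 _ _ ?_ v hv hv'
        intro hEq
        exact hne (Subtype.ext (Subtype.mk_eq_mk.1 hEq))
  · intro hLL
    obtain ⟨P, hgp, hdisj⟩ := linked_iff.1 hLL
    have hix : x₀ ∈ insert x₀ S := Set.mem_insert _ _
    obtain ⟨Q, h1, h2, h3⟩ := family_push hf hA1 hB1
      (fun s : (S : Set V) => P ⟨s.1, Set.mem_insert_of_mem _ s.2⟩) (fun s => hgp _)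
      (fun s s' hne => hdisj _ _ (fun h => hne (Subtype.ext (Subtype.mk_eq_mk.1 h))))
    have hgpa : GoodPath Adj' B₀' a (a :: (P ⟨x₀, hix⟩).map f) := by
      refine ((hgp ⟨x₀, hix⟩).map hf hA1 hB1).cons haA ?_
      intro hmem
      obtain ⟨u, _, hu⟩ := List.mem_map.1 hmem
      exact har ⟨u, hu⟩
    refine linked_iff.2 ⟨fun z => if hz : z.1 = a then a :: (P ⟨x₀, hix⟩).map f
      else Q ⟨z.1, (Set.mem_insert_iff.1 z.2).resolve_left hz⟩, ?_, ?_⟩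
    · intro z
      dsimp only
      split
      · next hz => rw [hz]; exact hgpa
      · exact h1 _
    · intro z z' hne v hv hv'
      dsimp only at hv hv'
      split at hv <;> split at hv'
      · next hz hz' => exact hne (Subtype.ext (hz.trans hz'.symm))
      · next hz hz' =>
        obtain ⟨s, _, hQ⟩ := h3 ⟨z'.1, (Set.mem_insert_iff.1 z'.2).resolve_left hz'⟩
        rw [hQ] at hv'
        obtain ⟨u', hu', rfl⟩ := List.mem_map.1 hv'
        rcases List.mem_cons.1 hv with h | h
        · exact har ⟨u', h⟩
        · obtain ⟨u, hu, huu⟩ := List.mem_map.1 h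
          cases hf huu
          have hsne : (⟨x₀, hix⟩ : (insert x₀ S : Set V)) ≠ ⟨s.1, Set.mem_insert_of_mem _ s.2⟩ :=
            fun hh => hx₀ (by rw [show x₀ = s.1 from Subtype.mk_eq_mk.1 hh]; exact s.2)
          exact hdisj _ _ hsne _ hu hu'
      · next hz hz' =>
        obtain ⟨s, _, hQ⟩ := h3 ⟨z.1, (Set.mem_insert_iff.1 z.2).resolve_left hz⟩
        rw [hQ] at hv
        obtain ⟨u', hu', rfl⟩ := List.mem_map.1 hv
        rcases List.mem_cons.1 hv' with h | h
        · exact har ⟨u', h⟩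
        · obtain ⟨u, hu, huu⟩ := List.mem_map.1 h
          cases hf huu
          have hsne : (⟨x₀, hix⟩ : (insert x₀ S : Set V)) ≠ ⟨s.1, Set.mem_insert_of_mem _ s.2⟩ :=
            fun hh => hx₀ (by rw [show x₀ = s.1 from Subtype.mk_eq_mk.1 hh]; exact s.2)
          exact hdisj _ _ hsne.symm _ hu' hu
      · next hz hz' =>
        refine h2 _ _ ?_ v hv hv'
        intro hEq
        exact hne (Subtype.ext (Subtype.mk_eq_mk.1 hEq))
    
/-- Gadget for series extension: vertex `a` (the new element `y`) with a private escape to a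
private target `t`, and vertex `b` (the relocated `x`) with edges to `t` and to `f x₀`. -/
theorem linked_insert_two (hf : Function.Injective f)
    (hA1 : ∀ u v, Adj u v → Adj' (f u) (f v)) (hA2 : ∀ u v, Adj' (f u) (f v) → Adj u v)
    (hB1 : ∀ v ∈ B₀, f v ∈ B₀') (hB2 : ∀ v, f v ∈ B₀' → v ∈ B₀)
    (closed : ∀ (u : V) (v' : V'), Adj' (f u) v' → ∃ w, v' = f w)
    {S : Set V} {a b t : V'} {x₀ : V}
    (hab : a ≠ b) (hat : a ≠ t) (hbt : b ≠ t)
    (har : a ∉ Set.range f) (hbr : b ∉ Set.range f) (htr : t ∉ Set.range f)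
    (haB : a ∉ B₀') (hbB : b ∉ B₀') (htB : t ∈ B₀')
    (haE : ∀ v', Adj' a v' → v' = t) (haA : Adj' a t)
    (hbE : ∀ v', Adj' b v' → v' = t ∨ v' = f x₀) (hbA : Adj' b (f x₀))
    (hx₀ : x₀ ∉ S) :
    Linked Adj' B₀' (insert a (insert b (f '' S))) ↔ Linked Adj B₀ (insert x₀ S) := by
  classical
  constructor
  · intro hLL
    obtain ⟨P, hgp, hdisj⟩ := linked_iff.1 hLL
    have hia : a ∈ insert a (insert b (f '' S)) := Set.mem_insert _ _
    have hib : b ∈ insert a (insert b (f '' S)) := Set.mem_insert_of_mem _ (Set.mem_insert _ _)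
    obtain ⟨la, hPa, _⟩ := (hgp ⟨a, hia⟩).prefix_elim haB haE
    have hta : t ∈ P ⟨a, hia⟩ := by
      rw [hPa]; exact List.mem_cons_of_mem _ (List.mem_cons_self)
    obtain ⟨c, lb, hPb, hbc, hgpb⟩ := (hgp ⟨b, hib⟩).step hbB
    have hneab : (⟨a, hia⟩ : (insert a (insert b (f '' S)) : Set V')) ≠ ⟨b, hib⟩ :=
      fun hh => hab (Subtype.mk_eq_mk.1 hh)
    rcases hbE c hbc with hct | hcx
    · rw [hct] at hPb
      exact absurd (by rw [hPb]; exact List.mem_cons_of_mem _ (List.mem_cons_self))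
        (hdisj _ _ hneab t hta)
    · rw [hcx] at hgpb
      obtain ⟨m, hm, hgpm⟩ := hgpb.pull hf hA2 hB2 closed
      rw [hcx] at hPb
      obtain ⟨Pm, h1, h2, h3⟩ := family_pull hf hA2 hB2 closed
        (fun z => P ⟨z.1, Set.mem_insert_of_mem _ (Set.mem_insert_of_mem _ z.2)⟩)
        (fun z => hgp _)
        (fun z z' hne => hdisj _ _ (fun hh => hne (Subtype.ext (Subtype.mk_eq_mk.1 hh))))
      refine linked_iff.2 ⟨fun s => if hs : s.1 = x₀ then m
        else Pm ⟨s.1, (Set.mem_insert_iff.1 s.2).resolve_left hs⟩, ?_, ?_⟩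
      · intro s
        dsimp only
        split
        · next hs => rw [hs]; exact hgpm
        · exact h1 _
      · intro s s' hne v hv hv'
        dsimp only at hv hv'
        split at hv <;> split at hv'
        · next hs hs' => exact hne (Subtype.ext (hs.trans hs'.symm))
        · next hs hs' =>
          have hfv1 : f v ∈ P ⟨b, hib⟩ := by
            rw [hPb, hm]
            exact List.mem_cons_of_mem _ (List.mem_map_of_mem (f := f) hv)
          have hfv2 := List.mem_map_of_mem (f := f) hv'
          rw [h3 ⟨s'.1, (Set.mem_insert_iff.1 s'.2).resolve_left hs'⟩] at hfv2
          exact hdisj _ _ (fun hh => hbr ⟨s'.1, (Subtype.mk_eq_mk.1 hh).symm⟩) (f v) hfv1 hfv2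
        · next hs hs' =>
          have hfv1 : f v ∈ P ⟨b, hib⟩ := by
            rw [hPb, hm]
            exact List.mem_cons_of_mem _ (List.mem_map_of_mem (f := f) hv')
          have hfv2 := List.mem_map_of_mem (f := f) hv
          rw [h3 ⟨s.1, (Set.mem_insert_iff.1 s.2).resolve_left hs⟩] at hfv2
          exact (hdisj _ _ (fun hh => hbr ⟨s.1, (Subtype.mk_eq_mk.1 hh).symm⟩)
            (f v) hfv1 hfv2).elim
        · next hs hs' =>
          refine h2 _ _ ?_ v hv hv'
          intro hEq
          exact hne (Subtype.ext (Subtype.mk_eq_mk.1 hEq))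
  · intro hLL
    obtain ⟨P, hgp, hdisj⟩ := linked_iff.1 hLL
    have hix : x₀ ∈ insert x₀ S := Set.mem_insert _ _
    obtain ⟨Q, h1, h2, h3⟩ := family_push hf hA1 hB1
      (fun s : (S : Set V) => P ⟨s.1, Set.mem_insert_of_mem _ s.2⟩) (fun s => hgp _)
      (fun s s' hne => hdisj _ _ (fun hh => hne (Subtype.ext (Subtype.mk_eq_mk.1 hh))))
    have hgpb : GoodPath Adj' B₀' b (b :: (P ⟨x₀, hix⟩).map f) := by
      refine ((hgp ⟨x₀, hix⟩).map hf hA1 hB1).cons hbA ?_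
      intro hmem
      obtain ⟨u, _, hu⟩ := List.mem_map.1 hmem
      exact hbr ⟨u, hu⟩
    refine linked_iff.2 ⟨fun z => if hza : z.1 = a then [a, t]
      else if hzb : z.1 = b then b :: (P ⟨x₀, hix⟩).map f
      else Q ⟨z.1, ((Set.mem_insert_iff.1 z.2).resolve_left hza).resolve_left hzb⟩, ?_, ?_⟩
    · intro z
      dsimp only
      split
      · next hz => rw [hz]; exact ⟨by simp [List.Chain', haA], by simp [hat], rfl, t, htB, by simp⟩
      · split
        · next hz => rw [hz]; exact hgpb
        · exact h1 _
    · intro z z' hne v hv hv'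
      dsimp only at hv hv'
      -- membership of v in the a-list
      split at hv <;> split at hv'
      · next hza hza' => exact hne (Subtype.ext (hza.trans hza'.symm))
      · next hza hza' =>
        -- v ∈ [a, t], v ∈ z'-path where z' ≠ a
        rcases (by simpa using hv : v = a ∨ v = t) with rfl | rfl
        · split at hv'
          · next hzb' => exact hab ((List.mem_cons.1 hv').elim id (fun hh => by
              obtain ⟨u, _, hu⟩ := List.mem_map.1 hh
              exact absurd hu.symm (by intro hc; exact har ⟨u, hc.symm⟩)))
          · next hzb' =>
            obtain ⟨s, _, hQ⟩ := h3 ⟨z'.1, ((Set.mem_insert_iff.1 z'.2).resolve_left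
              hza').resolve_left hzb'⟩
            rw [hQ] at hv'
            obtain ⟨u, _, hu⟩ := List.mem_map.1 hv'
            exact har ⟨u, hu⟩
        · split at hv'
          · next hzb' => exact hbt.symm ((List.mem_cons.1 hv').elim id (fun hh => by
              obtain ⟨u, _, hu⟩ := List.mem_map.1 hh
              exact absurd hu (by intro hc; exact htr ⟨u, hc⟩)))
          · next hzb' =>
            obtain ⟨s, _, hQ⟩ := h3 ⟨z'.1, ((Set.mem_insert_iff.1 z'.2).resolve_left
              hza').resolve_left hzb'⟩
            rw [hQ] at hv'
            obtain ⟨u, _, hu⟩ := List.mem_map.1 hv'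
            exact htr ⟨u, hu⟩
      · next hza hza' =>
        -- v ∈ z-path (z ≠ a), v ∈ [a, t]
        rcases (by simpa using hv' : v = a ∨ v = t) with rfl | rfl
        · split at hv
          · next hzb => exact hab ((List.mem_cons.1 hv).elim id (fun hh => by
              obtain ⟨u, _, hu⟩ := List.mem_map.1 hh
              exact absurd hu.symm (by intro hc; exact har ⟨u, hc.symm⟩)))
          · next hzb =>
            obtain ⟨s, _, hQ⟩ := h3 ⟨z.1, ((Set.mem_insert_iff.1 z.2).resolve_left
              hza).resolve_left hzb⟩
            rw [hQ] at hv
            obtain ⟨u, _, hu⟩ := List.mem_map.1 hv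
            exact har ⟨u, hu⟩
        · split at hv
          · next hzb => exact hbt.symm ((List.mem_cons.1 hv).elim id (fun hh => by
              obtain ⟨u, _, hu⟩ := List.mem_map.1 hh
              exact absurd hu (by intro hc; exact htr ⟨u, hc⟩)))
          · next hzb =>
            obtain ⟨s, _, hQ⟩ := h3 ⟨z.1, ((Set.mem_insert_iff.1 z.2).resolve_left
              hza).resolve_left hzb⟩
            rw [hQ] at hv
            obtain ⟨u, _, hu⟩ := List.mem_map.1 hv
            exact htr ⟨u, hu⟩
      · next hza hza' =>
        split at hv <;> split at hv'
        · next hzb hzb' => exact hne (Subtype.ext (hzb.trans hzb'.symm))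
        · next hzb hzb' =>
          obtain ⟨s, _, hQ⟩ := h3 ⟨z'.1, ((Set.mem_insert_iff.1 z'.2).resolve_left
            hza').resolve_left hzb'⟩
          rw [hQ] at hv'
          obtain ⟨u', hu', rfl⟩ := List.mem_map.1 hv'
          rcases List.mem_cons.1 hv with h | h
          · exact hbr ⟨u', h⟩
          · obtain ⟨u, hu, huu⟩ := List.mem_map.1 h
            cases hf huu
            have hsne : (⟨x₀, hix⟩ : (insert x₀ S : Set V)) ≠ ⟨s.1, Set.mem_insert_of_mem _ s.2⟩ :=
              fun hh => hx₀ (by rw [show x₀ = s.1 from Subtype.mk_eq_mk.1 hh]; exact s.2)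
            exact hdisj _ _ hsne _ hu hu'
        · next hzb hzb' =>
          obtain ⟨s, _, hQ⟩ := h3 ⟨z.1, ((Set.mem_insert_iff.1 z.2).resolve_left
            hza).resolve_left hzb⟩
          rw [hQ] at hv
          obtain ⟨u', hu', rfl⟩ := List.mem_map.1 hv
          rcases List.mem_cons.1 hv' with h | h
          · exact hbr ⟨u', h⟩
          · obtain ⟨u, hu, huu⟩ := List.mem_map.1 h
            cases hf huu
            have hsne : (⟨x₀, hix⟩ : (insert x₀ S : Set V)) ≠ ⟨s.1, Set.mem_insert_of_mem _ s.2⟩ :=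
              fun hh => hx₀ (by rw [show x₀ = s.1 from Subtype.mk_eq_mk.1 hh]; exact s.2)
            exact hdisj _ _ hsne.symm _ hu' hu
        · next hzb hzb' =>
          refine h2 _ _ ?_ v hv hv'
          intro hEq
          exact hne (Subtype.ext (Subtype.mk_eq_mk.1 hEq))

end Gadgets

/-! ### Combinatorial identification of the maximal linkable sets -/

section Combinatorics

variable {α : Type} [DecidableEq α]

/-- Maximal elements of a family of finsets. -/
def MaxOf (L : Finset α → Prop) (B : Finset α) : Prop :=
  L B ∧ ∀ D, L D → B ⊆ D → B = D

theorem para_max {E : Finset α} {x y : α} (hx : x ∈ E) (hy : y ∉ E)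
    (L L' : Finset α → Prop)
    (hground : ∀ B, L B → B ⊆ E)
    (hL' : ∀ C, L' C ↔ ((y ∉ C ∧ L C) ∨ (y ∈ C ∧ x ∉ C ∧ L (insert x (C.erase y)))))
    (C : Finset α) :
    MaxOf L' C ↔ (MaxOf L C ∨ ∃ B, MaxOf L B ∧ x ∈ B ∧ C = insert y (B.erase x)) := by
  have hxy : x ≠ y := fun h => hy (h ▸ hx)
  constructor
  · rintro ⟨hC, hmax⟩
    rw [hL'] at hC
    rcases hC with ⟨hyC, hLC⟩ | ⟨hyC, hxC, hLB⟩
    · left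
      refine ⟨hLC, fun D hD hsub => hmax D ?_ hsub⟩
      rw [hL']
      exact Or.inl ⟨fun h => hy (hground D hD h), hD⟩
    · right
      have hxB : x ∉ C.erase y := fun h => hxC (Finset.mem_of_mem_erase h)
      have hBC : C = insert y ((insert x (C.erase y)).erase x) := by
        rw [Finset.erase_insert hxB, Finset.insert_erase hyC]
      refine ⟨insert x (C.erase y), ⟨hLB, ?_⟩, Finset.mem_insert_self _ _, hBC⟩
      intro D hD hsub
      have hyD : y ∉ D := fun h => hy (hground D hD h)
      have hxD : x ∈ D := hsub (Finset.mem_insert_self _ _)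
      have hyDx : y ∉ D.erase x := fun h => hyD (Finset.mem_of_mem_erase h)
      have hL'D' : L' (insert y (D.erase x)) := by
        rw [hL']
        right
        refine ⟨Finset.mem_insert_self _ _, ?_, ?_⟩
        · intro h
          rcases Finset.mem_insert.1 h with h | h
          · exact hxy h
          · exact (Finset.mem_erase.1 h).1 rfl
        · rw [Finset.erase_insert hyDx, Finset.insert_erase hxD]
          exact hD
      have hCD' : C ⊆ insert y (D.erase x) := by
        intro c hc
        by_cases hcy : c = y
        · exact hcy ▸ Finset.mem_insert_self _ _
        · have hcB : c ∈ insert x (C.erase y) :=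
            Finset.mem_insert_of_mem (Finset.mem_erase.2 ⟨hcy, hc⟩)
          have hcD : c ∈ D := hsub hcB
          have hcx : c ≠ x := fun h => hxC (h ▸ hc)
          exact Finset.mem_insert_of_mem (Finset.mem_erase.2 ⟨hcx, hcD⟩)
      have hCeq := hmax _ hL'D' hCD'
      have h1 : C.erase y = D.erase x := by
        rw [hCeq, Finset.erase_insert hyDx]
      rw [h1, Finset.insert_erase hxD]
  · rintro (⟨hLC, hmaxC⟩ | ⟨B, ⟨hLB, hmaxB⟩, hxB, rfl⟩)
    · have hyC : y ∉ C := fun h => hy (hground _ hLC h)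
      refine ⟨(hL' C).2 (Or.inl ⟨hyC, hLC⟩), ?_⟩
      intro D hD hsub
      rw [hL'] at hD
      rcases hD with ⟨hyD, hLD⟩ | ⟨hyD, hxD, hLD⟩
      · exact hmaxC D hLD hsub
      · have hCsub : C ⊆ insert x (D.erase y) := by
          intro c hc
          have hcy : c ≠ y := fun h => hyC (h ▸ hc)
          exact Finset.mem_insert_of_mem (Finset.mem_erase.2 ⟨hcy, hsub hc⟩)
        have hCeq := hmaxC _ hLD hCsub
        exact absurd (hsub (hCeq ▸ Finset.mem_insert_self x _)) hxD
    · have hyB : y ∉ B := fun h => hy (hground _ hLB h)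
      have hyBx : y ∉ B.erase x := fun h => hyB (Finset.mem_of_mem_erase h)
      have hL'C : L' (insert y (B.erase x)) := by
        rw [hL']
        right
        refine ⟨Finset.mem_insert_self _ _, ?_, ?_⟩
        · intro h
          rcases Finset.mem_insert.1 h with h | h
          · exact hxy h
          · exact (Finset.mem_erase.1 h).1 rfl
        · rw [Finset.erase_insert hyBx, Finset.insert_erase hxB]
          exact hLB
      refine ⟨hL'C, ?_⟩
      intro D hD hsub
      rw [hL'] at hD
      rcases hD with ⟨hyD, _⟩ | ⟨hyD, hxD, hLD₂⟩
      · exact absurd (hsub (Finset.mem_insert_self _ _)) hyD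
      · have hBD₂ : B ⊆ insert x (D.erase y) := by
          intro c hc
          by_cases hcx : c = x
          · exact hcx ▸ Finset.mem_insert_self _ _
          · have hcC : c ∈ insert y (B.erase x) :=
              Finset.mem_insert_of_mem (Finset.mem_erase.2 ⟨hcx, hc⟩)
            have hcy : c ≠ y := fun h => hyB (h ▸ hc)
            exact Finset.mem_insert_of_mem (Finset.mem_erase.2 ⟨hcy, hsub hcC⟩)
        have hBeq := hmaxB _ hLD₂ hBD₂
        have hxDy : x ∉ D.erase y := fun h => hxD (Finset.mem_of_mem_erase h)
        have h1 : B.erase x = D.erase y := by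
          rw [hBeq, Finset.erase_insert hxDy]
        rw [h1, Finset.insert_erase hyD]

theorem series_max {E : Finset α} {x y : α} (hx : x ∈ E) (hy : y ∉ E)
    (L L' : Finset α → Prop)
    (hground : ∀ B, L B → B ⊆ E)
    (hL' : ∀ C, L' C ↔ ((y ∈ C ∧ L (C.erase y)) ∨ (y ∉ C ∧ L (C.erase x))))
    (C : Finset α) :
    MaxOf L' C ↔ ((∃ B, MaxOf L B ∧ C = insert y B) ∨
      (∃ B, MaxOf L B ∧ x ∉ B ∧ C = insert x B)) := by
  have hxy : x ≠ y := fun h => hy (h ▸ hx)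
  constructor
  · rintro ⟨hC, hmax⟩
    rw [hL'] at hC
    rcases hC with ⟨hyC, hLB⟩ | ⟨hyC, hLCx⟩
    · left
      refine ⟨C.erase y, ⟨hLB, ?_⟩, (Finset.insert_erase hyC).symm⟩
      intro D hD hsub
      have hyD : y ∉ D := fun h => hy (hground _ hD h)
      have hL'yD : L' (insert y D) := by
        rw [hL']
        exact Or.inl ⟨Finset.mem_insert_self _ _, by rw [Finset.erase_insert hyD]; exact hD⟩
      have hCsub : C ⊆ insert y D := by
        intro c hc
        by_cases hcy : c = y
        · exact hcy ▸ Finset.mem_insert_self _ _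
        · exact Finset.mem_insert_of_mem (hsub (Finset.mem_erase.2 ⟨hcy, hc⟩))
      have := hmax _ hL'yD hCsub
      rw [this, Finset.erase_insert hyD]
    · have hxC : x ∈ C := by
        by_contra hxC
        have hLC : L C := by rwa [Finset.erase_eq_of_notMem hxC] at hLCx
        have hL'yC : L' (insert y C) := by
          rw [hL']
          exact Or.inl ⟨Finset.mem_insert_self _ _, by rw [Finset.erase_insert hyC]; exact hLC⟩
        have := hmax _ hL'yC (Finset.subset_insert _ _)
        exact hyC (this ▸ Finset.mem_insert_self y C)
      right
      refine ⟨C.erase x, ⟨hLCx, ?_⟩, Finset.notMem_erase _ _, (Finset.insert_erase hxC).symm⟩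
      intro D hD hsub
      by_cases hxD : x ∈ D
      · have hyD : y ∉ D := fun h => hy (hground _ hD h)
        have hL'yD : L' (insert y D) := by
          rw [hL']
          exact Or.inl ⟨Finset.mem_insert_self _ _, by rw [Finset.erase_insert hyD]; exact hD⟩
        have hCsub : C ⊆ insert y D := by
          intro c hc
          by_cases hcx : c = x
          · exact Finset.mem_insert_of_mem (hcx ▸ hxD)
          · exact Finset.mem_insert_of_mem (hsub (Finset.mem_erase.2 ⟨hcx, hc⟩))
        have := hmax _ hL'yD hCsub
        exact absurd (this ▸ Finset.mem_insert_self y D : y ∈ C) hyC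
      · have hL'xD : L' (insert x D) := by
          rw [hL']
          refine Or.inr ⟨?_, by rw [Finset.erase_insert hxD]; exact hD⟩
          intro h
          rcases Finset.mem_insert.1 h with h | h
          · exact hxy h.symm
          · exact hy (hground _ hD h)
        have hCsub : C ⊆ insert x D := by
          intro c hc
          by_cases hcx : c = x
          · exact hcx ▸ Finset.mem_insert_self _ _
          · exact Finset.mem_insert_of_mem (hsub (Finset.mem_erase.2 ⟨hcx, hc⟩))
        have := hmax _ hL'xD hCsub
        rw [this, Finset.erase_insert hxD]
  · rintro (⟨B, ⟨hLB, hmaxB⟩, rfl⟩ | ⟨B, ⟨hLB, hmaxB⟩, hxB, rfl⟩)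
    · have hyB : y ∉ B := fun h => hy (hground _ hLB h)
      refine ⟨(hL' _).2 (Or.inl ⟨Finset.mem_insert_self _ _,
        by rw [Finset.erase_insert hyB]; exact hLB⟩), ?_⟩
      intro D hD hsub
      rw [hL'] at hD
      rcases hD with ⟨hyD, hLDy⟩ | ⟨hyD, _⟩
      · have hBsub : B ⊆ D.erase y := by
          intro c hc
          have hcy : c ≠ y := fun h => hyB (h ▸ hc)
          exact Finset.mem_erase.2 ⟨hcy, hsub (Finset.mem_insert_of_mem hc)⟩
        have := hmaxB _ hLDy hBsub
        rw [this, Finset.insert_erase hyD]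
      · exact absurd (hsub (Finset.mem_insert_self _ _)) hyD
    · have hyB : y ∉ B := fun h => hy (hground _ hLB h)
      have hyC : y ∉ insert x B := by
        intro h
        rcases Finset.mem_insert.1 h with h | h
        · exact hxy h.symm
        · exact hyB h
      refine ⟨(hL' _).2 (Or.inr ⟨hyC, by rw [Finset.erase_insert hxB]; exact hLB⟩), ?_⟩
      intro D hD hsub
      rw [hL'] at hD
      rcases hD with ⟨hyD, hLDy⟩ | ⟨hyD, hLDx⟩
      · have hBsub : B ⊆ D.erase y := by
          intro c hc
          have hcy : c ≠ y := fun h => hyB (h ▸ hc)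
          exact Finset.mem_erase.2 ⟨hcy, hsub (Finset.mem_insert_of_mem hc)⟩
        have hxmem : x ∈ B := by
          rw [hmaxB _ hLDy hBsub]
          exact Finset.mem_erase.2 ⟨hxy, hsub (Finset.mem_insert_self _ _)⟩
        exact absurd hxmem hxB
      · have hBsub : B ⊆ D.erase x := by
          intro c hc
          have hcx : c ≠ x := fun h => hxB (h ▸ hc)
          exact Finset.mem_erase.2 ⟨hcx, hsub (Finset.mem_insert_of_mem hc)⟩
        have hBeq := hmaxB _ hLDx hBsub
        have hxD : x ∈ D := hsub (Finset.mem_insert_self _ _)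
        rw [hBeq, Finset.insert_erase hxD]

end Combinatorics

/-! ### The parallel extension construction -/

section ParallelConstruction

variable {α : Type} [DecidableEq α] {V : Type}

/-- Graph for the parallel extension: a new vertex `none` with a single edge into `some w`. -/
def pAdj (Adj : V → V → Prop) (w : V) : Option V → Option V → Prop
  | some u, some v => Adj u v
  | none, some v => v = w
  | _, none => False

/-- Ground-set embedding for the parallel extension. -/
def pφ (φ : α → V) (y : α) : α → Option V := fun a => if a = y then none else some (φ a)

variable {Adj : V → V → Prop} {B₀ : Set V} {φ : α → V} {E : Finset α} {x y : α}

theorem pAdj_A1 {w : V} : ∀ u v, Adj u v → pAdj Adj w (some u) (some v) := fun _ _ h => h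

theorem pAdj_A2 {w : V} : ∀ u v, pAdj Adj w (some u) (some v) → Adj u v := fun _ _ h => h

theorem pAdj_closed {w : V} :
    ∀ (u : V) (v' : Option V), pAdj Adj w (some u) v' → ∃ z, v' = some z := by
  intro u v' h
  cases v' with
  | none => exact h.elim
  | some z => exact ⟨z, rfl⟩

theorem pB_1 : ∀ v ∈ B₀, some v ∈ some '' B₀ := fun v hv => ⟨v, hv, rfl⟩

theorem pB_2 : ∀ v : V, some v ∈ some '' B₀ → v ∈ B₀ := fun v hv =>
  ((Option.some_injective V).mem_set_image).1 hv

theorem pAdj_none {w : V} : ∀ v', pAdj Adj w none v' → v' = some w := by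
  intro v' h
  cases v' with
  | none => exact h.elim
  | some z => exact congrArg some h

theorem pnone_range : none ∉ Set.range (some : V → Option V) := by simp

theorem pnone_B : none ∉ (some '' B₀ : Set (Option V)) := by simp

theorem pφ_image_of_not_mem {C : Finset α} (hyC : y ∉ C) :
    pφ φ y '' ↑C = some '' (φ '' ↑C) := by
  rw [Set.image_image]
  exact Set.image_congr fun a ha => if_neg (by rintro rfl; exact hyC ha)

theorem pφ_image_of_mem {C : Finset α} (hyC : y ∈ C) :
    pφ φ y '' ↑C = insert none (some '' (φ '' ↑(C.erase y))) := by
  have hC : (↑C : Set α) = insert y ↑(C.erase y) := by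
    rw [← Finset.coe_insert, Finset.insert_erase hyC]
  rw [hC, Set.image_insert_eq, show pφ φ y y = none from if_pos rfl,
    pφ_image_of_not_mem (Finset.notMem_erase y C)]

theorem para_char (hφ : Set.InjOn φ ↑E) (hx : x ∈ E) (hy : y ∉ E) (C : Finset α) :
    (C ⊆ insert y E ∧ Linked (pAdj Adj (φ x)) (some '' B₀) (pφ φ y '' ↑C)) ↔
      ((y ∉ C ∧ (C ⊆ E ∧ Linked Adj B₀ (φ '' ↑C))) ∨
       (y ∈ C ∧ x ∉ C ∧ (insert x (C.erase y) ⊆ E ∧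
          Linked Adj B₀ (φ '' ↑(insert x (C.erase y)))))) := by
  have hf := Option.some_injective V
  have hxy : x ≠ y := fun h => hy (h ▸ hx)
  by_cases hyC : y ∈ C
  · rw [pφ_image_of_mem hyC]
    by_cases hxC : x ∈ C
    · constructor
      · rintro ⟨hCE, hlink⟩
        refine absurd hlink (not_linked_insert_prefix pnone_range pnone_B pAdj_none ?_)
        exact ⟨x, by simp [hxy, hxC], rfl⟩
      · rintro (⟨h, _⟩ | ⟨_, h, _⟩)
        · exact absurd hyC h
        · exact absurd hxC h
    · have hsub_iff : ∀ (hsub : insert x (C.erase y) ⊆ E), φ x ∉ φ '' ↑(C.erase y) := by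
        intro hsub
        rintro ⟨z, hz, hzx⟩
        have hz' : z ∈ C.erase y := Finset.mem_coe.1 hz
        have hzE : z ∈ E := hsub (Finset.mem_insert_of_mem hz')
        exact hxC ((hφ hzE hx hzx) ▸ (Finset.mem_erase.1 hz').2)
      constructor
      · rintro ⟨hCE, hlink⟩
        have hsub : insert x (C.erase y) ⊆ E := by
          intro c hc
          rcases Finset.mem_insert.1 hc with rfl | hc
          · exact hx
          · obtain ⟨hcy, hcC⟩ := Finset.mem_erase.1 hc
            exact (Finset.mem_insert.1 (hCE hcC)).resolve_left hcy
        have hlink' := (linked_insert_prefix hf pAdj_A1 pAdj_A2 pB_1 pB_2 pAdj_closed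
          pnone_range pnone_B pAdj_none rfl (hsub_iff hsub)).1 hlink
        refine Or.inr ⟨hyC, hxC, hsub, ?_⟩
        rwa [Finset.coe_insert, Set.image_insert_eq]
      · rintro (⟨hyn, _⟩ | ⟨_, _, hsub, hlink⟩)
        · exact absurd hyC hyn
        · have hCE : C ⊆ insert y E := by
            intro c hc
            by_cases hcy : c = y
            · exact hcy ▸ Finset.mem_insert_self _ _
            · exact Finset.mem_insert_of_mem
                (hsub (Finset.mem_insert_of_mem (Finset.mem_erase.2 ⟨hcy, hc⟩)))
          refine ⟨hCE, (linked_insert_prefix hf pAdj_A1 pAdj_A2 pB_1 pB_2 pAdj_closed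
            pnone_range pnone_B pAdj_none rfl (hsub_iff hsub)).2 ?_⟩
          rwa [Finset.coe_insert, Set.image_insert_eq] at hlink
  · rw [pφ_image_of_not_mem hyC,
      linked_image_iff hf pAdj_A1 pAdj_A2 pB_1 pB_2 pAdj_closed]
    constructor
    · rintro ⟨hCE, hlink⟩
      refine Or.inl ⟨hyC, fun c hc => ?_, hlink⟩
      rcases Finset.mem_insert.1 (hCE hc) with rfl | h
      · exact absurd hc hyC
      · exact h
    · rintro (⟨_, hsub, hlink⟩ | ⟨hyC', _, _⟩)
      · exact ⟨hsub.trans (Finset.subset_insert _ _), hlink⟩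
      · exact absurd hyC' hyC

theorem parallel_step {ℬ ℬ' : Finset α → Prop}
    (hx : x ∈ E) (hy : y ∉ E) (hM : IsGammoidBases E ℬ)
    (hb' : ∀ C, ℬ' C ↔ ℬ C ∨ ∃ B, ℬ B ∧ x ∈ B ∧ C = insert y (B.erase x)) :
    IsGammoidBases (insert y E) ℬ' := by
  obtain ⟨V, Adj, B₀, φ, hφ, hbases⟩ := hM
  refine ⟨Option V, pAdj Adj (φ x), some '' B₀, pφ φ y, ?_, ?_⟩
  · intro u hu v hv huv
    simp only [Finset.coe_insert, Set.mem_insert_iff, Finset.mem_coe] at hu hv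
    by_cases huy : u = y <;> by_cases hvy : v = y
    · rw [huy, hvy]
    · simp only [pφ] at huv
      rw [if_pos huy, if_neg hvy] at huv
      exact absurd huv (by simp)
    · simp only [pφ] at huv
      rw [if_neg huy, if_pos hvy] at huv
      exact absurd huv (by simp)
    · simp only [pφ] at huv
      rw [if_neg huy, if_neg hvy] at huv
      exact hφ (hu.resolve_left huy) (hv.resolve_left hvy) (Option.some_injective V huv)
  · intro B
    have key := para_max hx hy (fun D => D ⊆ E ∧ Linked Adj B₀ (φ '' ↑D))
      (fun D => D ⊆ insert y E ∧ Linked (pAdj Adj (φ x)) (some '' B₀) (pφ φ y '' ↑D))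
      (fun D hD => hD.1) (fun D => para_char hφ hx hy D) B
    rw [hb']
    constructor
    · rintro (hB | ⟨B0, hB0, hxB0, rfl⟩)
      · exact key.2 (Or.inl ((hbases B).1 hB))
      · exact key.2 (Or.inr ⟨B0, (hbases B0).1 hB0, hxB0, rfl⟩)
    · intro h
      rcases key.1 h with h1 | ⟨B0, h1, h2, h3⟩
      · exact Or.inl ((hbases B).2 h1)
      · exact Or.inr ⟨B0, (hbases B0).2 h1, h2, h3⟩

end ParallelConstruction

/-! ### The series extension construction -/

section SeriesConstruction

variable {α : Type} [DecidableEq α] {V : Type}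

/-- Graph for the series extension: new vertices `inr 0` (relocated `x`), `inr 1` (the new
element `y`) and a new target `inr 2`; edges `inr 0 → inr 2`, `inr 0 → inl w`, `inr 1 → inr 2`
on top of the old graph. -/
def sAdj (Adj : V → V → Prop) (w : V) : V ⊕ Fin 3 → V ⊕ Fin 3 → Prop
  | .inl a, .inl b => Adj a b
  | .inr i, .inl b => i = 0 ∧ b = w
  | .inr i, .inr j => (i = 0 ∨ i = 1) ∧ j = 2
  | .inl _, .inr _ => False

/-- Targets for the series extension. -/
def sB (B₀ : Set V) : Set (V ⊕ Fin 3) := (Sum.inl '' B₀) ∪ {Sum.inr 2}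

/-- Ground-set embedding for the series extension. -/
def sφ (φ : α → V) (x y : α) : α → V ⊕ Fin 3 := fun a =>
  if a = x then .inr 0 else if a = y then .inr 1 else .inl (φ a)

variable {Adj : V → V → Prop} {B₀ : Set V} {φ : α → V} {E : Finset α} {x y : α}

theorem sAdj_A1 {w : V} : ∀ u v, Adj u v → sAdj Adj w (.inl u) (.inl v) := fun _ _ h => h

theorem sAdj_A2 {w : V} : ∀ u v, sAdj Adj w (.inl u) (.inl v) → Adj u v := fun _ _ h => h

theorem sAdj_closed {w : V} :
    ∀ (u : V) (v' : V ⊕ Fin 3), sAdj Adj w (.inl u) v' → ∃ z, v' = Sum.inl z := by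
  intro u v' h
  cases v' with
  | inr j => exact h.elim
  | inl z => exact ⟨z, rfl⟩

theorem sB_1 : ∀ v ∈ B₀, (Sum.inl v : V ⊕ Fin 3) ∈ sB B₀ := fun v hv => Or.inl ⟨v, hv, rfl⟩

theorem sB_2 : ∀ v : V, (Sum.inl v : V ⊕ Fin 3) ∈ sB B₀ → v ∈ B₀ := by
  intro v hv
  rcases hv with ⟨u, hu, h⟩ | h
  · cases Sum.inl_injective h; exact hu
  · simp at h

theorem sr_not_range (i : Fin 3) : (Sum.inr i : V ⊕ Fin 3) ∉ Set.range Sum.inl := by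
  rintro ⟨u, hu⟩; simp at hu

theorem sr1_B : (Sum.inr 1 : V ⊕ Fin 3) ∉ sB B₀ := by
  rintro (⟨u, _, h⟩ | h)
  · simp at h
  · rw [Set.mem_singleton_iff] at h
    exact absurd (Sum.inr_injective h) (by decide)

theorem sr0_B : (Sum.inr 0 : V ⊕ Fin 3) ∉ sB B₀ := by
  rintro (⟨u, _, h⟩ | h)
  · simp at h
  · rw [Set.mem_singleton_iff] at h
    exact absurd (Sum.inr_injective h) (by decide)

theorem sr2_B : (Sum.inr 2 : V ⊕ Fin 3) ∈ sB B₀ := Or.inr rfl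

theorem sAdj_r1 {w : V} : ∀ v', sAdj Adj w (.inr 1) v' → v' = Sum.inr 2 := by
  intro v' h
  cases v' with
  | inl b => exact absurd h.1 (by decide)
  | inr j => rw [h.2]

theorem sAdj_r1A {w : V} : sAdj Adj w (.inr 1) (.inr 2) := ⟨Or.inr rfl, rfl⟩

theorem sAdj_r0 {w : V} : ∀ v', sAdj Adj w (.inr 0) v' → v' = Sum.inr 2 ∨ v' = Sum.inl w := by
  intro v' h
  cases v' with
  | inl b => exact Or.inr (by rw [h.2])
  | inr j => exact Or.inl (by rw [h.2])

theorem sAdj_r0t {w : V} : sAdj Adj w (.inr 0) (.inr 2) := ⟨Or.inl rfl, rfl⟩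

theorem sAdj_r0A {w : V} : sAdj Adj w (.inr 0) (.inl w) := ⟨rfl, rfl⟩

theorem sφ_image_nn {C : Finset α} (hxC : x ∉ C) (hyC : y ∉ C) :
    sφ φ x y '' ↑C = Sum.inl '' (φ '' ↑C) := by
  rw [Set.image_image]
  refine Set.image_congr fun a ha => ?_
  rw [sφ, if_neg (by rintro rfl; exact hxC ha), if_neg (by rintro rfl; exact hyC ha)]

theorem sφ_image_x {C : Finset α} (hxC : x ∈ C) (hyC : y ∉ C) :
    sφ φ x y '' ↑C = insert (Sum.inr 0) (Sum.inl '' (φ '' ↑(C.erase x))) := by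
  have hC : (↑C : Set α) = insert x ↑(C.erase x) := by
    rw [← Finset.coe_insert, Finset.insert_erase hxC]
  rw [hC, Set.image_insert_eq, show sφ φ x y x = Sum.inr 0 from if_pos rfl,
    sφ_image_nn (Finset.notMem_erase x C) (fun h => hyC (Finset.mem_of_mem_erase h))]

theorem sφ_image_y {C : Finset α} (hxC : x ∉ C) (hyC : y ∈ C) (hxy : x ≠ y) :
    sφ φ x y '' ↑C = insert (Sum.inr 1) (Sum.inl '' (φ '' ↑(C.erase y))) := by
  have hC : (↑C : Set α) = insert y ↑(C.erase y) := by
    rw [← Finset.coe_insert, Finset.insert_erase hyC]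
  rw [hC, Set.image_insert_eq,
    show sφ φ x y y = Sum.inr 1 from by rw [sφ, if_neg (Ne.symm hxy), if_pos rfl],
    sφ_image_nn (fun h => hxC (Finset.mem_of_mem_erase h)) (Finset.notMem_erase y C)]

theorem sφ_image_xy {C : Finset α} (hxC : x ∈ C) (hyC : y ∈ C) (hxy : x ≠ y) :
    sφ φ x y '' ↑C =
      insert (Sum.inr 1) (insert (Sum.inr 0) (Sum.inl '' (φ '' ↑((C.erase y).erase x)))) := by
  have hC : (↑C : Set α) = insert y ↑(C.erase y) := by
    rw [← Finset.coe_insert, Finset.insert_erase hyC]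
  rw [hC, Set.image_insert_eq,
    show sφ φ x y y = Sum.inr 1 from by rw [sφ, if_neg (Ne.symm hxy), if_pos rfl],
    sφ_image_x (Finset.mem_erase.2 ⟨hxy, hxC⟩) (Finset.notMem_erase y C)]

theorem series_char (hφ : Set.InjOn φ ↑E) (hx : x ∈ E) (hy : y ∉ E) (C : Finset α) :
    (C ⊆ insert y E ∧ Linked (sAdj Adj (φ x)) (sB B₀) (sφ φ x y '' ↑C)) ↔
      ((y ∈ C ∧ (C.erase y ⊆ E ∧ Linked Adj B₀ (φ '' ↑(C.erase y)))) ∨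
       (y ∉ C ∧ (C.erase x ⊆ E ∧ Linked Adj B₀ (φ '' ↑(C.erase x))))) := by
  have hf : Function.Injective (Sum.inl : V → V ⊕ Fin 3) := Sum.inl_injective
  have hxy : x ≠ y := fun h => hy (h ▸ hx)
  by_cases hyC : y ∈ C
  · by_cases hxC : x ∈ C
    · -- both x and y in C
      rw [sφ_image_xy hxC hyC hxy]
      have hxCy : x ∈ C.erase y := Finset.mem_erase.2 ⟨hxy, hxC⟩
      have himg : φ '' ↑(C.erase y) = insert (φ x) (φ '' ↑((C.erase y).erase x)) := by
        conv_lhs => rw [show (↑(C.erase y) : Set α) = insert x ↑((C.erase y).erase x) from by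
          rw [← Finset.coe_insert, Finset.insert_erase hxCy]]
        rw [Set.image_insert_eq]
      have key : ∀ (hEy : C.erase y ⊆ E), φ x ∉ φ '' ↑((C.erase y).erase x) := by
        intro hEy
        rintro ⟨z, hz, hzx⟩
        have hz' : z ∈ (C.erase y).erase x := Finset.mem_coe.1 hz
        have hzE : z ∈ E := hEy (Finset.mem_of_mem_erase hz')
        exact (Finset.mem_erase.1 hz').1 (hφ hzE hx hzx)
      constructor
      · rintro ⟨hCE, hlink⟩
        have hEy : C.erase y ⊆ E := fun c hc =>
          (Finset.mem_insert.1 (hCE (Finset.mem_of_mem_erase hc))).resolve_left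
            (Finset.mem_erase.1 hc).1
        have hlink' := (linked_insert_two hf sAdj_A1 sAdj_A2 sB_1 sB_2 sAdj_closed
          (by simp) (by simp) (by simp) (sr_not_range 1) (sr_not_range 0) (sr_not_range 2)
          sr1_B sr0_B sr2_B sAdj_r1 sAdj_r1A sAdj_r0 sAdj_r0A (key hEy)).1 hlink
        refine Or.inl ⟨hyC, hEy, ?_⟩
        rwa [himg]
      · rintro (⟨_, hEy, hlink⟩ | ⟨hyn, _⟩)
        · have hCE : C ⊆ insert y E := by
            intro c hc
            by_cases hcy : c = y
            · exact hcy ▸ Finset.mem_insert_self _ _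
            · exact Finset.mem_insert_of_mem (hEy (Finset.mem_erase.2 ⟨hcy, hc⟩))
          refine ⟨hCE, (linked_insert_two hf sAdj_A1 sAdj_A2 sB_1 sB_2 sAdj_closed
            (by simp) (by simp) (by simp) (sr_not_range 1) (sr_not_range 0) (sr_not_range 2)
            sr1_B sr0_B sr2_B sAdj_r1 sAdj_r1A sAdj_r0 sAdj_r0A (key hEy)).2 ?_⟩
          rwa [himg] at hlink
        · exact absurd hyC hyn
    · -- y in C, x not
      rw [sφ_image_y hxC hyC hxy]
      rw [linked_insert_single hf sAdj_A1 sAdj_A2 sB_1 sB_2 sAdj_closed sAdj_r1A (by simp)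
        (sr_not_range 1) (sr_not_range 2) sr2_B]
      constructor
      · rintro ⟨hCE, hlink⟩
        refine Or.inl ⟨hyC, fun c hc => ?_, hlink⟩
        exact (Finset.mem_insert.1 (hCE (Finset.mem_of_mem_erase hc))).resolve_left
          (Finset.mem_erase.1 hc).1
      · rintro (⟨_, hEy, hlink⟩ | ⟨hyn, _⟩)
        · refine ⟨?_, hlink⟩
          intro c hc
          by_cases hcy : c = y
          · exact hcy ▸ Finset.mem_insert_self _ _
          · exact Finset.mem_insert_of_mem (hEy (Finset.mem_erase.2 ⟨hcy, hc⟩))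
        · exact absurd hyC hyn
  · by_cases hxC : x ∈ C
    · -- x in C, y not
      rw [sφ_image_x hxC hyC]
      rw [linked_insert_single hf sAdj_A1 sAdj_A2 sB_1 sB_2 sAdj_closed sAdj_r0t (by simp)
        (sr_not_range 0) (sr_not_range 2) sr2_B]
      constructor
      · rintro ⟨hCE, hlink⟩
        refine Or.inr ⟨hyC, fun c hc => ?_, hlink⟩
        have hcC : c ∈ C := Finset.mem_of_mem_erase hc
        exact (Finset.mem_insert.1 (hCE hcC)).resolve_left (fun h => hyC (h ▸ hcC))
      · rintro (⟨hyn, _⟩ | ⟨_, hEx, hlink⟩)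
        · exact absurd hyn hyC
        · refine ⟨?_, hlink⟩
          intro c hc
          by_cases hcx : c = x
          · exact Finset.mem_insert_of_mem (hcx ▸ hx)
          · exact Finset.mem_insert_of_mem (hEx (Finset.mem_erase.2 ⟨hcx, hc⟩))
    · -- neither
      rw [sφ_image_nn hxC hyC,
        linked_image_iff hf sAdj_A1 sAdj_A2 sB_1 sB_2 sAdj_closed,
        Finset.erase_eq_of_notMem hxC]
      constructor
      · rintro ⟨hCE, hlink⟩
        refine Or.inr ⟨hyC, fun c hc => ?_, hlink⟩
        exact (Finset.mem_insert.1 (hCE hc)).resolve_left (fun h => hyC (h ▸ hc))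
      · rintro (⟨hyn, _⟩ | ⟨_, hEC, hlink⟩)
        · exact absurd hyn hyC
        · exact ⟨hEC.trans (Finset.subset_insert _ _), hlink⟩

theorem series_step {ℬ ℬ' : Finset α → Prop}
    (hx : x ∈ E) (hy : y ∉ E) (hM : IsGammoidBases E ℬ)
    (hb' : ∀ C, ℬ' C ↔ (∃ B, ℬ B ∧ C = insert y B) ∨ (∃ B, ℬ B ∧ x ∉ B ∧ C = insert x B)) :
    IsGammoidBases (insert y E) ℬ' := by
  obtain ⟨V, Adj, B₀, φ, hφ, hbases⟩ := hM
  have hxy : x ≠ y := fun h => hy (h ▸ hx)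
  refine ⟨V ⊕ Fin 3, sAdj Adj (φ x), sB B₀, sφ φ x y, ?_, ?_⟩
  · intro u hu v hv huv
    simp only [Finset.coe_insert, Set.mem_insert_iff, Finset.mem_coe] at hu hv
    simp only [sφ] at huv
    by_cases hux : u = x <;> by_cases hvx : v = x
    · rw [hux, hvx]
    · rw [if_pos hux, if_neg hvx] at huv
      by_cases hvy : v = y
      · rw [if_pos hvy] at huv
        exact absurd (Sum.inr_injective huv) (by decide)
      · rw [if_neg hvy] at huv
        exact absurd huv (by simp)
    · rw [if_neg hux, if_pos hvx] at huv
      by_cases huy : u = y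
      · rw [if_pos huy] at huv
        exact absurd (Sum.inr_injective huv) (by decide)
      · rw [if_neg huy] at huv
        exact absurd huv (by simp)
    · rw [if_neg hux, if_neg hvx] at huv
      by_cases huy : u = y <;> by_cases hvy : v = y
      · rw [huy, hvy]
      · rw [if_pos huy, if_neg hvy] at huv
        exact absurd huv (by simp)
      · rw [if_neg huy, if_pos hvy] at huv
        exact absurd huv (by simp)
      · rw [if_neg huy, if_neg hvy] at huv
        exact hφ (hu.resolve_left huy) (hv.resolve_left hvy) (Sum.inl_injective huv)
  · intro B
    have key := series_max hx hy (fun D => D ⊆ E ∧ Linked Adj B₀ (φ '' ↑D))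
      (fun D => D ⊆ insert y E ∧ Linked (sAdj Adj (φ x)) (sB B₀) (sφ φ x y '' ↑D))
      (fun D hD => hD.1) ?_ B
    · rw [hb']
      constructor
      · rintro (⟨B0, hB0, rfl⟩ | ⟨B0, hB0, hxB0, rfl⟩)
        · exact key.2 (Or.inl ⟨B0, (hbases B0).1 hB0, rfl⟩)
        · exact key.2 (Or.inr ⟨B0, (hbases B0).1 hB0, hxB0, rfl⟩)
      · intro h
        rcases key.1 h with ⟨B0, h1, h2⟩ | ⟨B0, h1, h2, h3⟩
        · exact Or.inl ⟨B0, (hbases B0).2 h1, h2⟩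
        · exact Or.inr ⟨B0, (hbases B0).2 h1, h2, h3⟩
    · intro D
      have hc := series_char hφ hx hy D (Adj := Adj) (B₀ := B₀)
      constructor
      · intro hD
        rcases hc.1 hD with ⟨h1, h2, h3⟩ | ⟨h1, h2, h3⟩
        · exact Or.inl ⟨h1, h2, h3⟩
        · exact Or.inr ⟨h1, h2, h3⟩
      · intro hD
        refine hc.2 ?_
        rcases hD with ⟨h1, h2, h3⟩ | ⟨h1, h2, h3⟩
        · exact Or.inl ⟨h1, h2, h3⟩
        · exact Or.inr ⟨h1, h2, h3⟩

end SeriesConstruction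

theorem strict_to_gammoid {α : Type} [DecidableEq α] {E : Finset α} {ℬ : Finset α → Prop}
    (h : IsStrictGammoidBases E ℬ) : IsGammoidBases E ℬ := by
  obtain ⟨Adj, B₀, _, _, hbases⟩ := h
  refine ⟨α, Adj, B₀, id, Set.injOn_id _, fun B => ?_⟩
  rw [hbases B]
  simp [Set.image_id]

/-- A series-parallel extension of a gammoid is a gammoid; in particular, a
parallel extension of a strict gammoid is a gammoid. -/
theorem stmt13 {α : Type} [DecidableEq α] :
    (∀ M M' : Finset α × (Finset α → Prop),
      IsGammoidBases M.1 M.2 → Relation.ReflTransGen SPStep M M' →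
        IsGammoidBases M'.1 M'.2) ∧
    (∀ (E E' : Finset α) (ℬ ℬ' : Finset α → Prop),
      IsStrictGammoidBases E ℬ →
      (∃ x ∈ E, ∃ y ∉ E, E' = insert y E ∧
        ∀ C, ℬ' C ↔ ℬ C ∨ (∃ B, ℬ B ∧ x ∈ B ∧ C = insert y (B.erase x))) →
      IsGammoidBases E' ℬ') := by
  constructor
  · intro M M' hM hRT
    induction hRT with
    | refl => exact hM
    | tail _ hstep ih =>
      obtain ⟨x, hx, y, hy, hE1, hcase⟩ := hstep
      rcases hcase with hser | hpar
      · rw [hE1]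
        exact series_step hx hy ih hser
      · rw [hE1]
        exact parallel_step hx hy ih hpar
  · intro E E' ℬ ℬ' hstrict hstep
    obtain ⟨x, hx, y, hy, rfl, h⟩ := hstep
    exact parallel_step hx hy (strict_to_gammoid hstrict) h
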